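/- Let k ≥ 1 and let x, y : ℤ → ℝ be nonzero sequences satisfying x(n+1) = 1/y(n-k) and y(n+1) = y(n-k)/(x(n)y(n)) for all n ≥ 0, with x(0)y(0) = 1. Then x(n)y(n) = 1 for all n ≥ 0, and y(n+1) = y(n-k) for all n ≥ 0, so every solution is periodic with period k+1. -/

import Mathlib

theorem stmt_4 (k : ℤ) (hk : 1 ≤ k) (x y : ℤ → ℝ)
    (hnz : ∀ n : ℤ, x n ≠ 0 ∧ y n ≠ 0)
    (hx : ∀ n : ℤ, 0 ≤ n → x (n + 1) = 1 / y (n - k))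
    (hy : ∀ n : ℤ, 0 ≤ n → y (n + 1) = y (n - k) / (x n * y n))
    (h0 : x 0 * y 0 = 1) :
    (∀ n : ℤ, 0 ≤ n → x n * y n = 1) ∧ (∀ n : ℤ, 0 ≤ n → y (n + 1) = y (n - k)) := by
  have key : ∀ n : ℤ, 0 ≤ n → x n * y n = 1 := by
    intro n hn
    refine Int.le_induction (motive := fun n _ => x n * y n = 1) h0 ?_ n hn
    intro m hm ih
    have hyk : y (m - k) ≠ 0 := (hnz (m - k)).2
    rw [hx m hm, hy m hm, ih]
    field_simp
  refine ⟨key, fun n hn => ?_⟩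
  rw [hy n hn, key n hn, div_one]
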